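/- For all λ ≥ 0 and w ≥ 0, one has B(λ+w) - B(λ) ≥ B(w) - B(0), where B(w) = w/(1-e^{-w}) (with B(0)=1). -/
import Mathlib

noncomputable def B : ℝ → ℝ := fun w => if w = 0 then 1 else w / (1 - Real.exp (-w))

lemma key_exp (x : ℝ) (hx : 0 ≤ x) : 2 * x * Real.exp (-x) ≤ 1 - (Real.exp (-x))^2 := by
  have h := (Real.self_le_sinh_iff).mpr hx
  rw [Real.sinh_eq] at h
  have he : 0 < Real.exp (-x) := Real.exp_pos _
  have hmul : Real.exp x * Real.exp (-x) = 1 := by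
    rw [← Real.exp_add]; simp
  nlinarith [mul_le_mul_of_nonneg_right h he.le]

theorem B_superadditive_shift (lam w : ℝ) (hlam : 0 ≤ lam) (hw : 0 ≤ w) :
    B w - B 0 ≤ B (lam + w) - B lam := by
  rcases hw.eq_or_lt with hw0 | hw0
  · subst hw0; simp
  rcases hlam.eq_or_lt with hl0 | hl0
  · subst hl0; simp
  have hw' : w ≠ 0 := ne_of_gt hw0
  have hl' : lam ≠ 0 := ne_of_gt hl0
  have hlw : lam + w ≠ 0 := by positivity
  simp only [B, if_neg hw', if_neg hl', if_neg hlw, if_pos rfl, if_true]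
  set a := Real.exp (-lam) with ha
  set b := Real.exp (-w) with hb
  have hab : Real.exp (-(lam + w)) = a * b := by
    rw [ha, hb, ← Real.exp_add]; ring_nf
  rw [hab]
  have ha0 : 0 < a := Real.exp_pos _
  have hb0 : 0 < b := Real.exp_pos _
  have ha1 : a < 1 := Real.exp_lt_one_iff.mpr (by linarith)
  have hb1 : b < 1 := Real.exp_lt_one_iff.mpr (by linarith)
  have hab1 : a * b < 1 := by nlinarith
  have h1 : (0:ℝ) < 1 - a := by linarith
  have h2 : (0:ℝ) < 1 - b := by linarith
  have h3 : (0:ℝ) < 1 - a * b := by linarith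
  have k1 := key_exp lam hlam
  have k2 := key_exp w hw
  rw [← ha] at k1
  rw [← hb] at k2
  rw [← sub_nonneg]
  have heq : (lam + w) / (1 - a * b) - lam / (1 - a) - (w / (1 - b) - 1)
      = ((1 - a^2 - 2*lam*a) * (1 - b)^2 + (1 - b^2 - 2*w*b) * (1 - a)^2)
        / (2 * ((1 - a*b) * (1 - a) * (1 - b))) := by
    field_simp
    ring
  rw [heq]
  apply div_nonneg
  · nlinarith [sq_nonneg (1-a), sq_nonneg (1-b)]
  · positivity
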